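/- Proposition 2 (per-constraint, distribution-free form): Let z be a real random variable on a probability space (Ω, ℱ, P) with finite second moment, mean z̄ and variance σ². Let b, f ∈ ℝ, β ≥ 0, δ ∈ (0, 1], and ε¹, ε² ∈ (0, 1) with ε¹ + ε² ≥ 2 − βδ. If z̄ + 𝒬(ε¹)·σ ≤ f − b and −z̄ + 𝒬(ε²)·σ ≤ f + b, then P(−f − b ≤ z ≤ f − b) ≥ 1 − βδ. Since the hypothesis involves only the mean and variance of z, the conclusion holds for every distribution of z in the moment-based ambiguity set determined by z̄ and σ². -/

import Mathlib

open MeasureTheory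

/-- The DR quantile function `𝒬(α) = √(α/(1-α))`. -/
noncomputable def drQ (α : ℝ) : ℝ := Real.sqrt (α / (1 - α))

lemma cantelli {Ω : Type*} [MeasurableSpace Ω] (P : Measure Ω) [IsProbabilityMeasure P]
    {Y : Ω → ℝ} (hY : MemLp Y 2 P) (hmean : ∫ ω, Y ω ∂P = 0)
    {σ2 t : ℝ} (hvar : ∫ ω, Y ω ^ 2 ∂P = σ2) (ht : 0 < t) :
    (P {ω | t ≤ Y ω}).toReal ≤ σ2 / (σ2 + t ^ 2) := by
  have hσ2 : 0 ≤ σ2 := hvar ▸ integral_nonneg fun ω => sq_nonneg _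
  set u : ℝ := σ2 / t with hu
  have hu0 : 0 ≤ u := div_nonneg hσ2 ht.le
  have htu : 0 < t + u := by positivity
  have hYu : MemLp (fun ω => Y ω + u) 2 P := hY.add (memLp_const u)
  have hint : Integrable (fun ω => (Y ω + u) ^ 2) P := by
    simpa [sq] using hYu.integrable_sq
  have hintval : ∫ ω, (Y ω + u) ^ 2 ∂P = σ2 + u ^ 2 := by
    have h1 : Integrable (fun ω => Y ω ^ 2) P := by simpa [sq] using hY.integrable_sq
    have h2 : Integrable (fun ω => 2 * u * Y ω) P :=
      (hY.integrable one_le_two).const_mul _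
    have h3 : Integrable (fun _ : Ω => u ^ 2) P := integrable_const _
    have e1 : ∫ ω, (Y ω ^ 2 + 2 * u * Y ω) ∂P = σ2 := by
      rw [integral_add h1 h2, integral_const_mul, hmean, hvar]; ring
    calc ∫ ω, (Y ω + u) ^ 2 ∂P
        = ∫ ω, ((Y ω ^ 2 + 2 * u * Y ω) + u ^ 2) ∂P := by congr 1; ext ω; ring
      _ = σ2 + u ^ 2 := by
          have h12 : Integrable (fun ω => Y ω ^ 2 + 2 * u * Y ω) P := h1.add h2
          rw [integral_add h12 h3, e1, integral_const]; simp
  have hmono : P {ω | t ≤ Y ω} ≤ P {ω | (t + u) ^ 2 ≤ (Y ω + u) ^ 2} := by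
    apply measure_mono
    intro ω hω
    exact pow_le_pow_left₀ htu.le (by linarith [Set.mem_setOf_eq ▸ hω]) 2
  have hmarkov := mul_meas_ge_le_integral_of_nonneg
    (ae_of_all P fun ω => sq_nonneg (Y ω + u)) hint ((t + u) ^ 2)
  rw [hintval] at hmarkov
  have htfin : P {ω | t ≤ Y ω} ≠ ⊤ := measure_ne_top _ _
  have hle : (P {ω | t ≤ Y ω}).toReal ≤ (P {ω | (t + u) ^ 2 ≤ (Y ω + u) ^ 2}).toReal :=
    ENNReal.toReal_mono (measure_ne_top _ _) hmono
  have key : (t + u) ^ 2 * (P {ω | t ≤ Y ω}).toReal ≤ σ2 + u ^ 2 :=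
    le_trans (by rw [measureReal_def]; nlinarith [sq_nonneg (t+u)]) hmarkov
  have : (P {ω | t ≤ Y ω}).toReal ≤ (σ2 + u ^ 2) / (t + u) ^ 2 := by
    rw [le_div_iff₀ (by positivity)]
    linarith [key]
  refine this.trans (le_of_eq ?_)
  rw [hu]
  field_simp
  ring

/-- Proposition 2 (per-constraint, distribution-free form): a two-sided Cantelli-type
tightening on the mean and standard deviation of `z` implies the two-sided risk bound
`P(-f - b ≤ z ≤ f - b) ≥ 1 - β δ`, for every distribution of `z` with the given mean
and variance. -/
theorem dr_two_sided_constraint {Ω : Type*} [MeasurableSpace Ω]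
    (P : Measure Ω) [IsProbabilityMeasure P]
    (z : Ω → ℝ) (hz : Measurable z) (hz2 : MemLp z 2 P)
    (zbar σ : ℝ) (hσ : 0 ≤ σ)
    (hmean : ∫ ω, z ω ∂P = zbar)
    (hvar : ∫ ω, (z ω - zbar) ^ 2 ∂P = σ ^ 2)
    (b f β δ ε1 ε2 : ℝ) (hβ : 0 ≤ β) (hδ : δ ∈ Set.Ioc (0 : ℝ) 1)
    (hε1 : ε1 ∈ Set.Ioo (0 : ℝ) 1) (hε2 : ε2 ∈ Set.Ioo (0 : ℝ) 1)
    (hsum : 2 - β * δ ≤ ε1 + ε2)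
    (h1 : zbar + drQ ε1 * σ ≤ f - b)
    (h2 : -zbar + drQ ε2 * σ ≤ f + b) :
    ENNReal.ofReal (1 - β * δ) ≤ P {ω | -f - b ≤ z ω ∧ z ω ≤ f - b} := by
  obtain ⟨hδ0, hδ1⟩ := hδ
  obtain ⟨hε1a, hε1b⟩ := hε1
  obtain ⟨hε2a, hε2b⟩ := hε2
  have hβδ : 0 ≤ β * δ := mul_nonneg hβ hδ0.le
  set G : Set Ω := {ω | -f - b ≤ z ω ∧ z ω ≤ f - b} with hG
  have hGm : MeasurableSet G :=
    (measurableSet_le measurable_const hz).inter (measurableSet_le hz measurable_const)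
  have hY1 : MemLp (fun ω => z ω - zbar) 2 P := hz2.sub (memLp_const zbar)
  rcases eq_or_lt_of_le hσ with hσ0 | hσpos
  · -- σ = 0 : z = zbar a.e.
    have hvar0 : ∫ ω, (z ω - zbar) ^ 2 ∂P = 0 := by rw [hvar, ← hσ0]; ring
    have hint : Integrable (fun ω => (z ω - zbar) ^ 2) P := by
      simpa [sq] using hY1.integrable_sq
    have hzero : ∀ᵐ ω ∂P, (z ω - zbar) ^ 2 = 0 := by
      have := (integral_eq_zero_iff_of_nonneg (fun ω => sq_nonneg (z ω - zbar)) hint).mp hvar0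
      filter_upwards [this] with ω hω using hω
    have hmem : ∀ᵐ ω ∂P, ω ∈ G := by
      filter_upwards [hzero] with ω hω
      have hzω : z ω = zbar := by nlinarith [sq_nonneg (z ω - zbar)]
      have hq1 : 0 ≤ drQ ε1 * σ := by
        rw [← hσ0]; simp
      have hq2 : 0 ≤ drQ ε2 * σ := by
        rw [← hσ0]; simp
      constructor <;> simp only [hzω] <;> linarith
    have hPG : (1 : ENNReal) ≤ P G := by
      calc (1 : ENNReal) = P Set.univ := (measure_univ).symm
        _ ≤ P G := measure_mono_ae (by filter_upwards [hmem] with ω hω _ using hω)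
    exact le_trans (ENNReal.ofReal_le_one.mpr (by linarith)) hPG
  · -- σ > 0
    have hm1 : ∫ ω, (z ω - zbar) ∂P = 0 := by
      rw [integral_sub (hz2.integrable one_le_two) (integrable_const _), hmean,
        integral_const]
      simp
    have hY2 : MemLp (fun ω => zbar - z ω) 2 P := (memLp_const zbar).sub hz2
    have hm2 : ∫ ω, (zbar - z ω) ∂P = 0 := by
      have : (fun ω => zbar - z ω) = fun ω => -(z ω - zbar) := by ext ω; ring
      rw [this, integral_neg, hm1, neg_zero]
    have hvar2 : ∫ ω, (zbar - z ω) ^ 2 ∂P = σ ^ 2 := by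
      rw [← hvar]; congr 1; ext ω; ring
    have hσne : σ ≠ 0 := ne_of_gt hσpos
    have hd1 : (0:ℝ) < ε1 / (1 - ε1) := div_pos hε1a (by linarith)
    have hd2 : (0:ℝ) < ε2 / (1 - ε2) := div_pos hε2a (by linarith)
    have hq1pos : 0 < drQ ε1 := Real.sqrt_pos.mpr hd1
    have hq2pos : 0 < drQ ε2 := Real.sqrt_pos.mpr hd2
    have hq1sq : drQ ε1 ^ 2 = ε1 / (1 - ε1) := Real.sq_sqrt hd1.le
    have hq2sq : drQ ε2 ^ 2 = ε2 / (1 - ε2) := Real.sq_sqrt hd2.le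
    have ht1 : 0 < drQ ε1 * σ := mul_pos hq1pos hσpos
    have ht2 : 0 < drQ ε2 * σ := mul_pos hq2pos hσpos
    have c1 := cantelli P hY1 hm1 hvar ht1
    have c2 := cantelli P hY2 hm2 hvar2 ht2
    have e1 : σ ^ 2 / (σ ^ 2 + (drQ ε1 * σ) ^ 2) = 1 - ε1 := by
      rw [mul_pow, hq1sq]
      have h1ε : (1 : ℝ) - ε1 ≠ 0 := by linarith
      field_simp [hσne]
      have hs : σ ^ 2 * σ⁻¹ ^ 2 = 1 := by field_simp
      linear_combination
    have e2 : σ ^ 2 / (σ ^ 2 + (drQ ε2 * σ) ^ 2) = 1 - ε2 := by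
      rw [mul_pow, hq2sq]
      have h2ε : (1 : ℝ) - ε2 ≠ 0 := by linarith
      field_simp [hσne]
      have hs : σ ^ 2 * σ⁻¹ ^ 2 = 1 := by field_simp
      linear_combination
    rw [e1] at c1
    rw [e2] at c2
    -- complement inclusion
    have hsub : Gᶜ ⊆ {ω | drQ ε1 * σ ≤ z ω - zbar} ∪ {ω | drQ ε2 * σ ≤ zbar - z ω} := by
      intro ω hω
      simp only [hG, Set.mem_compl_iff, Set.mem_setOf_eq, not_and_or, not_le] at hω
      rcases hω with hω | hω
      · right; simp only [Set.mem_setOf_eq]; linarith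
      · left; simp only [Set.mem_setOf_eq]; linarith
    have hcompl : (P Gᶜ).toReal ≤ (1 - ε1) + (1 - ε2) := by
      have := (measure_mono hsub).trans (measure_union_le (μ := P) _ _)
      have htr : (P Gᶜ).toReal ≤
          (P {ω | drQ ε1 * σ ≤ z ω - zbar}).toReal
          + (P {ω | drQ ε2 * σ ≤ zbar - z ω}).toReal := by
        rw [← ENNReal.toReal_add (measure_ne_top _ _) (measure_ne_top _ _)]
        exact ENNReal.toReal_mono (by finiteness) this
      linarith
    have hsumeq : (P G).toReal + (P Gᶜ).toReal = 1 := by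
      rw [← ENNReal.toReal_add (measure_ne_top _ _) (measure_ne_top _ _),
        measure_add_measure_compl hGm]
      simp
    have : 1 - β * δ ≤ (P G).toReal := by linarith
    exact ENNReal.ofReal_le_of_le_toReal this
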